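/- Let F : ℝ^n ⇉ ℝ^m be a set-valued mapping with closed graph and ȳ ∈ J(F). If ker D*F(∞, ȳ) = {0}, then F is linearly open at infinity around (∞, ȳ): there exist constants R > 0, μ > 0, ε > 0 and a neighborhood V of ȳ in ℝ^m such that (F(x) + μr𝔹) ∩ V ⊆ F(x + r𝔹) for every x ∈ ℝ^n with ‖x‖ > R and every r ∈ (0, ε). -/

import Mathlib

open Filter Topology Set Metric Pointwise
open scoped RealInnerProductSpace ENNReal

noncomputable section

variable {E F G : Type*}
  [NormedAddCommGroup E] [InnerProductSpace ℝ E]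
  [NormedAddCommGroup F] [InnerProductSpace ℝ F]
  [NormedAddCommGroup G] [InnerProductSpace ℝ G]

/-- The regular (Fréchet) normal cone to a subset of a product of inner product
spaces, at a point `p` (empty if `p ∉ Ω`). -/
def frechetNormalCone2 (Ω : Set (E × F)) (p : E × F) : Set (E × F) :=
  {ξ | p ∈ Ω ∧ ∀ ε > (0:ℝ), ∀ᶠ q in nhdsWithin p Ω,
      ⟪ξ.1, q.1 - p.1⟫ + ⟪ξ.2, q.2 - p.2⟫ ≤ ε * ‖q - p‖}

/-- The limiting (Mordukhovich) normal cone. -/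
def limitingNormalCone2 (Ω : Set (E × F)) (p : E × F) : Set (E × F) :=
  {ξ | ∃ pk : ℕ → E × F, ∃ ξk : ℕ → E × F,
    (∀ k, pk k ∈ Ω) ∧ Tendsto pk atTop (𝓝 p) ∧
    (∀ k, ξk k ∈ frechetNormalCone2 Ω (pk k)) ∧ Tendsto ξk atTop (𝓝 ξ)}

/-- The normal cone to `Ω ⊆ E × F` at `(∞, ȳ)`. -/
def normalConeAtInfty (Ω : Set (E × F)) (ybar : F) : Set (E × F) :=
  {ξ | ∃ pk : ℕ → E × F, ∃ ξk : ℕ → E × F,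
    (∀ k, pk k ∈ Ω) ∧ Tendsto (fun k => ‖(pk k).1‖) atTop atTop ∧
    Tendsto (fun k => (pk k).2) atTop (𝓝 ybar) ∧
    (∀ k, ξk k ∈ frechetNormalCone2 Ω (pk k)) ∧ Tendsto ξk atTop (𝓝 ξ)}

/-- `Ω ⊆ E × F` is locally closed at `(∞, ȳ)`. -/
def LocallyClosedAtInfty (Ω : Set (E × F)) (ybar : F) : Prop :=
  ∃ R > (0:ℝ), ∃ V ∈ 𝓝 ybar, IsClosed V ∧
    IsClosed (Ω ∩ {p : E × F | R ≤ ‖p.1‖ ∧ p.2 ∈ V})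

/-- Graph of a set-valued mapping. -/
def svGraph (S : E → Set F) : Set (E × F) := {p | p.2 ∈ S p.1}

/-- Jelonek set of a set-valued mapping. -/
def jelonek (S : E → Set F) : Set F :=
  {y | ∃ xk : ℕ → E, ∃ yk : ℕ → F,
    Tendsto (fun k => ‖xk k‖) atTop atTop ∧ (∀ k, yk k ∈ S (xk k)) ∧
    Tendsto yk atTop (𝓝 y)}

/-- Coderivative of a set-valued mapping at a point of its graph. -/
def coderiv (S : E → Set F) (x : E) (y : F) (v : F) : Set E :=
  {u | (u, -v) ∈ limitingNormalCone2 (svGraph S) (x, y)}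

/-- Coderivative of a set-valued mapping at `(∞, ȳ)`. -/
def coderivAtInfty (S : E → Set F) (ybar : F) (v : F) : Set E :=
  {u | (u, -v) ∈ normalConeAtInfty (svGraph S) ybar}

/-- Regular normal cone, one-space version. -/
def frechetNormalCone1 (Ω : Set E) (x : E) : Set E :=
  {ξ | x ∈ Ω ∧ ∀ ε > (0:ℝ), ∀ᶠ x' in nhdsWithin x Ω, ⟪ξ, x' - x⟫ ≤ ε * ‖x' - x‖}

/-- Normal cone at infinity to an unbounded subset of `E`. -/
def normalConeAtInfty1 (Ω : Set E) : Set E :=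
  {ξ | ∃ xk : ℕ → E, ∃ ξk : ℕ → E, (∀ k, xk k ∈ Ω) ∧
    Tendsto (fun k => ‖xk k‖) atTop atTop ∧
    (∀ k, ξk k ∈ frechetNormalCone1 Ω (xk k)) ∧ Tendsto ξk atTop (𝓝 ξ)}

/-- Epigraph of an extended-real-valued function. -/
def epiSet (f : E → EReal) : Set (E × ℝ) := {p | f p.1 ≤ (p.2 : EReal)}

/-- Graph of an extended-real-valued function, as a subset of `E × ℝ`. -/
def gphFun (f : E → EReal) : Set (E × ℝ) := {p | f p.1 = (p.2 : EReal)}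

/-- Jelonek set of a function. -/
def jelonekFun (f : E → EReal) : Set ℝ :=
  {y | ∃ xk : ℕ → E, Tendsto (fun k => ‖xk k‖) atTop atTop ∧
    Tendsto (fun k => f (xk k)) atTop (𝓝 (y : EReal))}

/-- Limiting subdifferential of `f` at `x` (empty outside `dom f`). -/
def limSubdiff (f : E → EReal) (x : E) : Set E :=
  {u | ∃ r : ℝ, f x = (r : EReal) ∧
    (u, (-1 : ℝ)) ∈ limitingNormalCone2 (epiSet f) (x, r)}

/-- Limiting subdifferential of `f` at `(∞, ȳ)`. -/
def limSubdiffAtInfty (f : E → EReal) (ybar : ℝ) : Set E :=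
  {u | (u, (-1 : ℝ)) ∈ normalConeAtInfty (epiSet f) ybar}

/-- Singular subdifferential of `f` at `(∞, ȳ)`. -/
def singSubdiffAtInfty (f : E → EReal) (ybar : ℝ) : Set E :=
  {u | (u, (0 : ℝ)) ∈ normalConeAtInfty (epiSet f) ybar}

/-- Inverse of a set-valued mapping. -/
def svInv (S : E → Set F) (y : F) : Set E := {x | y ∈ S x}

/-- Preimage `F⁻¹(V) = {x : F(x) ∩ V ≠ ∅}`. -/
def svPreimage (S : E → Set F) (V : Set F) : Set E := {x | (S x ∩ V).Nonempty}

/-- Distance function of a set-valued mapping, with value `+∞` on empty values. -/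
def dSV (S : E → Set F) (p : E × F) : EReal :=
  ((EMetric.infEdist p.2 (S p.1) : ℝ≥0∞) : EReal)

/-- Regular normal cone on `(E × F) × ℝ`. -/
def frechetNormalCone3 (Ω : Set ((E × F) × ℝ)) (p : (E × F) × ℝ) : Set ((E × F) × ℝ) :=
  {ξ | p ∈ Ω ∧ ∀ ε > (0:ℝ), ∀ᶠ q in nhdsWithin p Ω,
      ⟪ξ.1.1, q.1.1 - p.1.1⟫ + ⟪ξ.1.2, q.1.2 - p.1.2⟫ + ξ.2 * (q.2 - p.2)
        ≤ ε * ‖q - p‖}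

/-- Limiting normal cone on `(E × F) × ℝ`. -/
def limitingNormalCone3 (Ω : Set ((E × F) × ℝ)) (p : (E × F) × ℝ) : Set ((E × F) × ℝ) :=
  {ξ | ∃ pk ξk : ℕ → (E × F) × ℝ, (∀ k, pk k ∈ Ω) ∧ Tendsto pk atTop (𝓝 p) ∧
    (∀ k, ξk k ∈ frechetNormalCone3 Ω (pk k)) ∧ Tendsto ξk atTop (𝓝 ξ)}

/-- Limiting subdifferential of the distance function `d_F`. -/
def limSubdiffD (S : E → Set F) (p : E × F) : Set (E × F) :=
  {w | ∃ r : ℝ, dSV S p = (r : EReal) ∧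
    (w, (-1 : ℝ)) ∈ limitingNormalCone3 {q : (E × F) × ℝ | dSV S q.1 ≤ (q.2 : EReal)} (p, r)}

/-- The set `J⁺(F₁ + F₂, y)`. -/
def jplus (S₁ S₂ : E → Set F) (y : F) : Set (F × F) :=
  {q | ∃ xk : ℕ → E, ∃ y1k y2k : ℕ → F,
    Tendsto (fun k => ‖xk k‖) atTop atTop ∧
    (∀ k, y1k k ∈ S₁ (xk k)) ∧ (∀ k, y2k k ∈ S₂ (xk k)) ∧
    Tendsto y1k atTop (𝓝 q.1) ∧ Tendsto y2k atTop (𝓝 q.2) ∧ q.1 + q.2 = y}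

/-- The set `J°(F₂ ∘ F₁, y)`. -/
def jcirc (S₁ : E → Set G) (S₂ : G → Set F) (y : F) : Set G :=
  {z | ∃ xk : ℕ → E, ∃ zk : ℕ → G, ∃ yk : ℕ → F,
    Tendsto (fun k => ‖xk k‖) atTop atTop ∧ (∀ k, zk k ∈ S₁ (xk k)) ∧
    (∀ k, yk k ∈ S₂ (zk k)) ∧ Tendsto zk atTop (𝓝 z) ∧ Tendsto yk atTop (𝓝 y)}

/-- Composition `F₂ ∘ F₁` of set-valued mappings. -/
def svComp (S₂ : G → Set F) (S₁ : E → Set G) (x : E) : Set F :=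
  {y | ∃ z ∈ S₁ x, y ∈ S₂ z}

abbrev Eucl (n : ℕ) := EuclideanSpace ℝ (Fin n)

private lemma sqle {a b : ℝ} (ha : 0 ≤ a) (hb : 0 ≤ b) (h : a^2 ≤ b^2) : a ≤ b := by
  nlinarith

set_option maxHeartbeats 1000000 in
lemma keyLemma {n m : ℕ} (S : Eucl n → Set (Eucl m)) (hS : IsClosed (svGraph S))
    (x : Eucl n) (y : Eucl m) (r μ : ℝ) (hr : 0 < r) (hμ : 0 < μ) (hμ2 : μ ≤ 1/4)
    (hz : ∃ z ∈ S x, ‖y - z‖ ≤ μ * r)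
    (hy : y ∉ ⋃ x' ∈ closedBall x r, S x') :
    ∃ (p ξ : Eucl n × Eucl m) (v : Eucl m),
      p ∈ svGraph S ∧ ξ ∈ frechetNormalCone2 (svGraph S) p ∧
      ‖p.1 - x‖ ≤ r ∧ ‖p.2 - y‖ ≤ r ∧ ‖v‖ = 1 ∧
      ‖ξ.1‖ ≤ 8*μ ∧ ‖ξ.2 + v‖ ≤ 8*μ := by
  obtain ⟨z, hzS, hzy⟩ := hz
  set Ω : Set (Eucl n × Eucl m) := svGraph S ∩ {q | ‖q.1 - x‖ ≤ r} with hΩdef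
  have hΩc : IsClosed Ω := hS.inter (isClosed_le (by fun_prop) continuous_const)
  have hKcl : IsClosed (Ω ∩ {q | ‖q.2 - y‖ ≤ μ * r}) :=
    hΩc.inter (isClosed_le (by fun_prop) continuous_const)
  have hKb : Bornology.IsBounded (Ω ∩ {q | ‖q.2 - y‖ ≤ μ * r}) := by
    apply ((Metric.isBounded_closedBall (x := x) (r := r)).prod
        (Metric.isBounded_closedBall (x := y) (r := μ*r))).subset
    rintro q ⟨⟨_, h1⟩, h2⟩
    exact Set.mem_prod.2 ⟨by simpa [Metric.mem_closedBall, dist_eq_norm] using h1,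
      by simpa [Metric.mem_closedBall, dist_eq_norm] using h2⟩
  have hxzΩ : ((x, z) : Eucl n × Eucl m) ∈ Ω := ⟨hzS, by simp [hr.le]⟩
  have hxzK : ((x, z) : Eucl n × Eucl m) ∈ Ω ∩ {q | ‖q.2 - y‖ ≤ μ * r} := by
    refine ⟨hxzΩ, ?_⟩
    simp only [Set.mem_setOf_eq]
    rw [norm_sub_rev]; exact hzy
  obtain ⟨p, hpK, hpmin⟩ := (isCompact_of_isClosed_isBounded hKcl hKb).exists_isMinOn
    ⟨(x,z), hxzK⟩
    ((Continuous.continuousOn (by fun_prop : Continuous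
        (fun q : Eucl n × Eucl m => ‖q.2 - y‖ + (2*μ) * ‖q.1 - x‖))))
  rw [isMinOn_iff] at hpmin
  have hφxz : ‖z - y‖ + (2*μ) * ‖x - x‖ ≤ μ * r := by
    rw [norm_sub_rev]; simp; linarith [hzy]
  have hglob : ∀ q ∈ Ω, ‖p.2 - y‖ + (2*μ) * ‖p.1 - x‖ ≤ ‖q.2 - y‖ + (2*μ) * ‖q.1 - x‖ := by
    intro q hq
    by_cases h : ‖q.2 - y‖ ≤ μ * r
    · exact hpmin q ⟨hq, h⟩
    · have h1 := hpmin (x, z) hxzK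
      push_neg at h
      have h2 : (0:ℝ) ≤ (2*μ) * ‖q.1 - x‖ := by positivity
      simp only at h1
      linarith
  have h1 : ‖p.2 - y‖ ≤ μ * r := hpK.2
  have h2 : ‖p.1 - x‖ ≤ r/2 := by
    have h3 := hpmin (x, z) hxzK
    simp only at h3
    have h4 : (0:ℝ) ≤ ‖p.2 - y‖ := norm_nonneg _
    nlinarith [hφxz]
  have hpΩ : p ∈ Ω := hpK.1
  have hpS : p.2 ∈ S p.1 := hpΩ.1
  have hpy : p.2 ≠ y := by
    intro h
    apply hy
    refine Set.mem_iUnion₂.2 ⟨p.1, ?_, ?_⟩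
    · rw [Metric.mem_closedBall, dist_eq_norm]; exact le_trans h2 (by linarith)
    · rw [← h]; exact hpS
  set d : ℝ := ‖p.2 - y‖ with hddef
  have hd : 0 < d := norm_pos_iff.2 (sub_ne_zero.2 hpy)
  set vstar : Eucl m := d⁻¹ • (p.2 - y) with hvdef
  have hv1 : ‖vstar‖ = 1 := by
    rw [hvdef, norm_smul, Real.norm_eq_abs, abs_of_pos (inv_pos.2 hd), ← hddef]
    exact inv_mul_cancel₀ hd.ne'
  -- key approximate-normality inequality
  have hkey : ∀ q ∈ Ω, 2*d*⟪-vstar, q.2 - p.2⟫ ≤ 4*d*μ*‖q.1 - p.1‖ + ‖q.2 - p.2‖^2 := by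
    intro q hq
    have hmin := hglob q hq
    have htr : ‖q.1 - x‖ ≤ ‖q.1 - p.1‖ + ‖p.1 - x‖ := norm_sub_le_norm_sub_add_norm_sub _ _ _
    have hi : d - ‖q.2 - y‖ ≤ 2*μ*‖q.1 - p.1‖ := by nlinarith
    have hexp : ⟪p.2 - y, q.2 - p.2⟫ = ⟪p.2 - y, q.2 - y⟫ - d^2 := by
      rw [show q.2 - p.2 = (q.2 - y) - (p.2 - y) by abel, inner_sub_right,
        real_inner_self_eq_norm_sq, ← hddef]
    have hcs : ⟪p.2 - y, q.2 - y⟫ ≤ d * ‖q.2 - y‖ := by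
      calc ⟪p.2 - y, q.2 - y⟫ ≤ ‖p.2 - y‖ * ‖q.2 - y‖ := real_inner_le_norm _ _
        _ = d * ‖q.2 - y‖ := rfl
    have hns : ‖q.2 - p.2‖^2 = ‖q.2 - y‖^2 - 2*⟪q.2 - y, p.2 - y⟫ + d^2 := by
      rw [show q.2 - p.2 = (q.2 - y) - (p.2 - y) by abel, norm_sub_sq_real]
    have e1 : 2*d*⟪-vstar, q.2 - p.2⟫ = -2*(⟪p.2 - y, q.2 - y⟫ - d^2) := by
      rw [inner_neg_left, hvdef, real_inner_smul_left, hexp]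
      have hdd : d * d⁻¹ = 1 := mul_inv_cancel₀ hd.ne'
      linear_combination (-2*(⟪p.2 - y, q.2 - y⟫ - d^2)) * hdd
    rw [e1]
    have hcomm : ⟪q.2 - y, p.2 - y⟫ = ⟪p.2 - y, q.2 - y⟫ := real_inner_comm _ _
    have hB : (0:ℝ) ≤ ‖q.2 - y‖ := norm_nonneg _
    have hDq : (0:ℝ) ≤ ‖q.1 - p.1‖ := norm_nonneg _
    nlinarith [sq_nonneg (d - ‖q.2 - y‖), mul_nonneg (mul_nonneg (le_of_lt hd) hμ.le) hDq]
  -- projection step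
  set t : ℝ := min (r/8) (d/2) with htdef
  have ht : 0 < t := lt_min (by linarith) (by linarith)
  have ht1 : t ≤ r/8 := min_le_left _ _
  have ht2 : t ≤ d/2 := min_le_right _ _
  set z2 : Eucl m := p.2 - t • vstar with hz2def
  have hfp : ‖p.1 - p.1‖^2 + ‖p.2 - z2‖^2 = t^2 := by
    rw [hz2def, sub_sub_cancel, norm_smul, Real.norm_eq_abs, abs_of_pos ht, hv1]
    simp
  have hK'cl : IsClosed (Ω ∩ {q | ‖q.1 - p.1‖^2 + ‖q.2 - z2‖^2 ≤ t^2}) :=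
    hΩc.inter (isClosed_le (by fun_prop) continuous_const)
  have hK'b : Bornology.IsBounded (Ω ∩ {q | ‖q.1 - p.1‖^2 + ‖q.2 - z2‖^2 ≤ t^2}) := by
    apply ((Metric.isBounded_closedBall (x := p.1) (r := t)).prod
        (Metric.isBounded_closedBall (x := z2) (r := t))).subset
    rintro q ⟨_, hq2⟩
    simp only [Set.mem_setOf_eq] at hq2
    have hq21 : ‖q.1 - p.1‖ ≤ t := sqle (norm_nonneg _) ht.le
      (by nlinarith [sq_nonneg ‖q.2 - z2‖])
    have hq22 : ‖q.2 - z2‖ ≤ t := sqle (norm_nonneg _) ht.le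
      (by nlinarith [sq_nonneg ‖q.1 - p.1‖])
    exact Set.mem_prod.2 ⟨by rwa [Metric.mem_closedBall, dist_eq_norm],
      by rwa [Metric.mem_closedBall, dist_eq_norm]⟩
  have hpK' : p ∈ Ω ∩ {q | ‖q.1 - p.1‖^2 + ‖q.2 - z2‖^2 ≤ t^2} := ⟨hpΩ, le_of_eq hfp⟩
  obtain ⟨pi, hπK, hπmin⟩ := (isCompact_of_isClosed_isBounded hK'cl hK'b).exists_isMinOn
    ⟨p, hpK'⟩
    ((Continuous.continuousOn (by fun_prop : Continuous
        (fun q : Eucl n × Eucl m => ‖q.1 - p.1‖^2 + ‖q.2 - z2‖^2))))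
  rw [isMinOn_iff] at hπmin
  have hπΩ : pi ∈ Ω := hπK.1
  have hfπ : ‖pi.1 - p.1‖^2 + ‖pi.2 - z2‖^2 ≤ t^2 := hπK.2
  have hπglob : ∀ q ∈ Ω, ‖pi.1 - p.1‖^2 + ‖pi.2 - z2‖^2 ≤ ‖q.1 - p.1‖^2 + ‖q.2 - z2‖^2 := by
    intro q hq
    by_cases h : ‖q.1 - p.1‖^2 + ‖q.2 - z2‖^2 ≤ t^2
    · exact hπmin q ⟨hq, h⟩
    · push_neg at h; linarith
  have prox : ∀ q ∈ Ω, ⟪p.1 - pi.1, q.1 - pi.1⟫ + ⟪z2 - pi.2, q.2 - pi.2⟫ ≤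
      (‖q.1 - pi.1‖^2 + ‖q.2 - pi.2‖^2)/2 := by
    intro q hq
    have h := hπglob q hq
    have e1 : ‖q.1 - p.1‖^2 = ‖q.1 - pi.1‖^2 - 2*⟪q.1 - pi.1, p.1 - pi.1⟫ + ‖p.1 - pi.1‖^2 := by
      rw [show q.1 - p.1 = (q.1 - pi.1) - (p.1 - pi.1) by abel, norm_sub_sq_real]
    have e2 : ‖q.2 - z2‖^2 = ‖q.2 - pi.2‖^2 - 2*⟪q.2 - pi.2, z2 - pi.2⟫ + ‖z2 - pi.2‖^2 := by
      rw [show q.2 - z2 = (q.2 - pi.2) - (z2 - pi.2) by abel, norm_sub_sq_real]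
    have e3 : ‖pi.1 - p.1‖ = ‖p.1 - pi.1‖ := norm_sub_rev _ _
    have e4 : ‖pi.2 - z2‖ = ‖z2 - pi.2‖ := norm_sub_rev _ _
    have c1 : ⟪q.1 - pi.1, p.1 - pi.1⟫ = ⟪p.1 - pi.1, q.1 - pi.1⟫ := real_inner_comm _ _
    have c2 : ⟪q.2 - pi.2, z2 - pi.2⟫ = ⟪z2 - pi.2, q.2 - pi.2⟫ := real_inner_comm _ _
    rw [e3, e4] at h
    linarith [h, e1, e2, c1, c2]
  have hDn : (0:ℝ) ≤ ‖pi.1 - p.1‖ := norm_nonneg _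
  have hDvn : (0:ℝ) ≤ ‖pi.2 - p.2‖ := norm_nonneg _
  have hDb : 2*‖pi.1 - p.1‖^2 + ‖pi.2 - p.2‖^2 ≤ 8*t*μ*‖pi.1 - p.1‖ := by
    have hIP : ‖pi.1 - p.1‖^2 + ‖pi.2 - p.2‖^2 ≤ 2*t*⟪-vstar, pi.2 - p.2⟫ := by
      have e5 : ‖pi.2 - z2‖^2 = ‖pi.2 - p.2‖^2 + 2*(t*⟪pi.2 - p.2, vstar⟫) + t^2 := by
        rw [hz2def, show pi.2 - (p.2 - t • vstar) = (pi.2 - p.2) + t • vstar by abel,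
          norm_add_sq_real, real_inner_smul_right, norm_smul, Real.norm_eq_abs,
          abs_of_pos ht, hv1]
        ring
      have e6 : ⟪-vstar, pi.2 - p.2⟫ = -⟪pi.2 - p.2, vstar⟫ := by
        rw [inner_neg_left, real_inner_comm]
      nlinarith [hfπ, e5, e6]
    have hk := hkey pi hπΩ
    have step : d * (2*‖pi.1 - p.1‖^2 + ‖pi.2 - p.2‖^2) ≤ d * (8*t*μ*‖pi.1 - p.1‖) := by
      nlinarith [mul_le_mul_of_nonneg_left hIP hd.le, mul_le_mul_of_nonneg_left hk ht.le,
        mul_nonneg (by linarith : (0:ℝ) ≤ d/2 - t) (sq_nonneg ‖pi.2 - p.2‖)]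
    exact le_of_mul_le_mul_left step hd
  have hD : ‖pi.1 - p.1‖ ≤ 4*t*μ := by
    rcases eq_or_lt_of_le hDn with h0 | h0
    · rw [← h0]; positivity
    · have h3 : (2*‖pi.1 - p.1‖)*‖pi.1 - p.1‖ ≤ (8*t*μ)*‖pi.1 - p.1‖ := by nlinarith
      have := le_of_mul_le_mul_right h3 h0
      linarith
  have hDv : ‖pi.2 - p.2‖ ≤ 6*t*μ := by
    refine sqle hDvn (by positivity) ?_
    nlinarith [mul_nonneg (mul_nonneg ht.le hμ.le) hDn, sq_nonneg ‖pi.1 - p.1‖]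
  have hπ1x : ‖pi.1 - x‖ ≤ 5*r/8 := by
    have htri := norm_sub_le_norm_sub_add_norm_sub pi.1 p.1 x
    have h4tμ : 4*t*μ ≤ r/8 := by nlinarith [ht1, hμ2, ht.le, hμ.le]
    linarith
  have hμr : μ*r ≤ r/4 := by nlinarith
  have hπ2y : ‖pi.2 - y‖ ≤ r := by
    have htri := norm_sub_le_norm_sub_add_norm_sub pi.2 p.2 y
    have h6tμ : 6*t*μ ≤ r/4 := by nlinarith [ht1, hμ2, ht.le, hμ.le]
    linarith
  refine ⟨pi, (t⁻¹ • (p.1 - pi.1), t⁻¹ • (z2 - pi.2)), vstar, hπΩ.1, ?_, by linarith, hπ2y,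
    hv1, ?_, ?_⟩
  · refine ⟨hπΩ.1, ?_⟩
    intro ε hε
    rw [eventually_nhdsWithin_iff, Metric.eventually_nhds_iff]
    refine ⟨min (r/4) (t*ε), lt_min (by linarith) (mul_pos ht hε), ?_⟩
    intro q hqd hqS
    have hqn : ‖q - pi‖ < min (r/4) (t*ε) := by rw [← dist_eq_norm]; exact hqd
    have hmax : ‖q - pi‖ = max ‖q.1 - pi.1‖ ‖q.2 - pi.2‖ := by
      rw [Prod.norm_def]; rfl
    have hb1 : ‖q.1 - pi.1‖ ≤ ‖q - pi‖ := by rw [hmax]; exact le_max_left _ _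
    have hb2 : ‖q.2 - pi.2‖ ≤ ‖q - pi‖ := by rw [hmax]; exact le_max_right _ _
    have hqΩ : q ∈ Ω := by
      refine ⟨hqS, ?_⟩
      have htri := norm_sub_le_norm_sub_add_norm_sub q.1 pi.1 x
      simp only [Set.mem_setOf_eq]
      have hsm : ‖q.1 - pi.1‖ < r/4 := lt_of_le_of_lt hb1 (lt_of_lt_of_le hqn (min_le_left _ _))
      linarith
    have hp := prox q hqΩ
    show ⟪t⁻¹ • (p.1 - pi.1), q.1 - pi.1⟫ + ⟪t⁻¹ • (z2 - pi.2), q.2 - pi.2⟫ ≤ ε * ‖q - pi‖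
    rw [real_inner_smul_left, real_inner_smul_left, ← mul_add]
    have s1 : ⟪p.1 - pi.1, q.1 - pi.1⟫ + ⟪z2 - pi.2, q.2 - pi.2⟫ ≤ ‖q - pi‖^2 := by
      have b1 : ‖q.1 - pi.1‖^2 ≤ ‖q - pi‖^2 := pow_le_pow_left₀ (norm_nonneg _) hb1 2
      have b2 : ‖q.2 - pi.2‖^2 ≤ ‖q - pi‖^2 := pow_le_pow_left₀ (norm_nonneg _) hb2 2
      linarith
    have s2 := mul_le_mul_of_nonneg_left s1 (inv_pos.2 ht).le
    have s3 : t⁻¹ * ‖q - pi‖^2 ≤ t⁻¹ * ((t*ε) * ‖q - pi‖) := by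
      apply mul_le_mul_of_nonneg_left ?_ (inv_pos.2 ht).le
      have hle : ‖q - pi‖ ≤ t*ε := le_of_lt (lt_of_lt_of_le hqn (min_le_right _ _))
      nlinarith [norm_nonneg (q - pi)]
    have s4 : t⁻¹ * ((t*ε) * ‖q - pi‖) = ε * ‖q - pi‖ := by
      field_simp
    linarith
  · show ‖t⁻¹ • (p.1 - pi.1)‖ ≤ 8*μ
    rw [norm_smul, Real.norm_eq_abs, abs_of_pos (inv_pos.2 ht), norm_sub_rev]
    have h5 : t⁻¹ * ‖pi.1 - p.1‖ ≤ t⁻¹ * (4*t*μ) := mul_le_mul_of_nonneg_left hD (inv_pos.2 ht).le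
    have h6 : t⁻¹ * (4*t*μ) = 4*μ := by field_simp
    linarith
  · show ‖(t⁻¹ • (z2 - pi.2)) + vstar‖ ≤ 8*μ
    have e7 : (t⁻¹ • (z2 - pi.2)) + vstar = t⁻¹ • (p.2 - pi.2) := by
      rw [hz2def, show p.2 - t • vstar - pi.2 = (p.2 - pi.2) - t • vstar by abel,
        smul_sub, smul_smul, inv_mul_cancel₀ ht.ne', one_smul, sub_add_cancel]
    rw [e7, norm_smul, Real.norm_eq_abs, abs_of_pos (inv_pos.2 ht), norm_sub_rev]
    have h5 : t⁻¹ * ‖pi.2 - p.2‖ ≤ t⁻¹ * (6*t*μ) := mul_le_mul_of_nonneg_left hDv (inv_pos.2 ht).le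
    have h6 : t⁻¹ * (6*t*μ) = 6*μ := by field_simp
    linarith

/-- coderivative nonsingularity at infinity implies linear openness
at infinity. -/
theorem stmt10 {n m : ℕ} (S : Eucl n → Set (Eucl m)) (hS : IsClosed (svGraph S))
    (ybar : Eucl m) (hJ : ybar ∈ jelonek S)
    (hker : {v : Eucl m | (0 : Eucl n) ∈ coderivAtInfty S ybar v} = {0}) :
    ∃ R > (0:ℝ), ∃ μ > (0:ℝ), ∃ ε > (0:ℝ), ∃ V ∈ 𝓝 ybar,
      ∀ (x : Eucl n) (r : ℝ), R < ‖x‖ → 0 < r → r < ε →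
        (S x + closedBall (0 : Eucl m) (μ * r)) ∩ V ⊆ ⋃ x' ∈ closedBall x r, S x' := by
  by_contra hcon
  push_neg at hcon
  have H : ∀ k : ℕ, ∃ (p ξ : Eucl n × Eucl m) (v : Eucl m),
      p ∈ svGraph S ∧ ξ ∈ frechetNormalCone2 (svGraph S) p ∧
      (k : ℝ) ≤ ‖p.1‖ ∧ ‖p.2 - ybar‖ ≤ 2/((k:ℝ)+1) ∧ ‖v‖ = 1 ∧
      ‖ξ.1‖ ≤ 1/((k:ℝ)+1) ∧ ‖ξ.2 + v‖ ≤ 1/((k:ℝ)+1) := by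
    intro k
    have hk1 : (0:ℝ) < (k:ℝ)+1 := by positivity
    obtain ⟨x, r, hx, hr, hrε, hns⟩ := hcon ((k:ℝ)+1) hk1 (1/(8*((k:ℝ)+1))) (by positivity)
      (1/((k:ℝ)+1)) (by positivity) (Metric.ball ybar (1/((k:ℝ)+1)))
      (Metric.ball_mem_nhds _ (by positivity))
    obtain ⟨ypt, hyA, hyB⟩ := Set.not_subset.1 hns
    obtain ⟨hyadd, hyball⟩ := hyA
    obtain ⟨a, ha, b, hb, hab⟩ := Set.mem_add.1 hyadd
    have hz : ∃ z ∈ S x, ‖ypt - z‖ ≤ (1/(8*((k:ℝ)+1))) * r :=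
      ⟨a, ha, by rw [← hab]; simpa using (mem_closedBall_zero_iff.1 hb)⟩
    have hμ4 : (1/(8*((k:ℝ)+1))) ≤ 1/4 := by
      rw [div_le_div_iff₀ (by positivity) (by norm_num : (0:ℝ) < 4)]
      nlinarith [Nat.cast_nonneg (α := ℝ) k]
    obtain ⟨p, ξ, v, hp1, hp2, hp3, hp4, hp5, hp6, hp7⟩ :=
      keyLemma S hS x ypt r (1/(8*((k:ℝ)+1))) hr (by positivity) hμ4 hz hyB
    have hrle : r ≤ 1 := by
      have : 1/((k:ℝ)+1) ≤ 1 := by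
        rw [div_le_one hk1]; linarith [Nat.cast_nonneg (α := ℝ) k]
      linarith
    refine ⟨p, ξ, v, hp1, hp2, ?_, ?_, hp5, ?_, ?_⟩
    · have h8 := norm_sub_norm_le x p.1
      have h9 : ‖x - p.1‖ = ‖p.1 - x‖ := norm_sub_rev _ _
      linarith [hp3]
    · have hyb : ‖ypt - ybar‖ < 1/((k:ℝ)+1) := by
        have := Metric.mem_ball.1 hyball; rwa [dist_eq_norm] at this
      have htri := norm_sub_le_norm_sub_add_norm_sub p.2 ypt ybar
      have h2div : 2/((k:ℝ)+1) = 1/((k:ℝ)+1) + 1/((k:ℝ)+1) := by ring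
      linarith [hp4, hrε]
    · have he : 8 * (1/(8*((k:ℝ)+1))) = 1/((k:ℝ)+1) := by field_simp
      linarith [hp6]
    · have he : 8 * (1/(8*((k:ℝ)+1))) = 1/((k:ℝ)+1) := by field_simp
      linarith [hp7]
  choose p ξ v h1 h2 h3 h4 h5 h6 h7 using H
  obtain ⟨vlim, hvs, φ, hφ, hvt⟩ := (isCompact_sphere (0 : Eucl m) 1).tendsto_subseq
    (x := v) (fun k => mem_sphere_zero_iff_norm.2 (h5 k))
  have hvnorm : ‖vlim‖ = 1 := mem_sphere_zero_iff_norm.1 hvs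
  have htend : Tendsto (fun j : ℕ => (j:ℝ)+1) atTop atTop :=
    tendsto_atTop_add_const_right _ 1 tendsto_natCast_atTop_atTop
  have hz2 : Tendsto (fun j : ℕ => 2/((j:ℝ)+1)) atTop (𝓝 0) :=
    Tendsto.div_atTop tendsto_const_nhds htend
  have hz1 : Tendsto (fun j : ℕ => 1/((j:ℝ)+1)) atTop (𝓝 0) :=
    Tendsto.div_atTop tendsto_const_nhds htend
  have hmono : ∀ j : ℕ, 1/((φ j : ℝ)+1) ≤ 1/((j:ℝ)+1) := by
    intro j
    apply one_div_le_one_div_of_le (by positivity)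
    have : (j:ℝ) ≤ (φ j : ℝ) := Nat.cast_le.2 hφ.le_apply
    linarith
  have hmem : ((0 : Eucl n), -vlim) ∈ normalConeAtInfty (svGraph S) ybar := by
    refine ⟨fun j => p (φ j), fun j => ξ (φ j), fun j => h1 _, ?_, ?_, fun j => h2 _, ?_⟩
    · apply tendsto_atTop_mono (f := fun j : ℕ => (j:ℝ)) ?_ tendsto_natCast_atTop_atTop
      intro j
      calc (j:ℝ) ≤ (φ j : ℝ) := Nat.cast_le.2 hφ.le_apply
        _ ≤ ‖(p (φ j)).1‖ := h3 _
    · rw [tendsto_iff_norm_sub_tendsto_zero]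
      apply squeeze_zero (fun j => norm_nonneg _) (g := fun j : ℕ => 2/((j:ℝ)+1)) ?_ hz2
      intro j
      calc ‖(p (φ j)).2 - ybar‖ ≤ 2/((φ j:ℝ)+1) := h4 _
        _ ≤ 2/((j:ℝ)+1) := by
            gcongr
            exact_mod_cast hφ.le_apply
    · have hfun : (fun j : ℕ => ξ (φ j)) = fun j => ((ξ (φ j)).1, (ξ (φ j)).2) := by
        funext j; rfl
      rw [hfun]
      apply Tendsto.prodMk_nhds
      · apply squeeze_zero_norm (a := fun j : ℕ => 1/((j:ℝ)+1)) ?_ hz1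
        intro j
        calc ‖(ξ (φ j)).1‖ ≤ 1/((φ j:ℝ)+1) := h6 _
          _ ≤ 1/((j:ℝ)+1) := hmono j
      · have hre : (fun j : ℕ => (ξ (φ j)).2) =
            fun j => ((ξ (φ j)).2 + v (φ j)) - v (φ j) := by
          funext j; abel
        rw [hre]
        have hA : Tendsto (fun j : ℕ => (ξ (φ j)).2 + v (φ j)) atTop (𝓝 0) := by
          apply squeeze_zero_norm (a := fun j : ℕ => 1/((j:ℝ)+1)) ?_ hz1
          intro j
          calc ‖(ξ (φ j)).2 + v (φ j)‖ ≤ 1/((φ j:ℝ)+1) := h7 _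
            _ ≤ 1/((j:ℝ)+1) := hmono j
        have hB := hA.sub hvt
        simpa using hB
  have hvm : vlim ∈ {v : Eucl m | (0 : Eucl n) ∈ coderivAtInfty S ybar v} := hmem
  rw [hker] at hvm
  have hv0 : vlim = 0 := hvm
  rw [hv0] at hvnorm
  simp at hvnorm
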